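/- Suppose 0 ≤ u ∈ C²(B) satisfies a uniformly elliptic equation a^{ij}D_{ij}u + b^j D_j u = 2c > 0 on a ball B ⊆ ℝ^m, and u(p) = 0, Du(p) = 0 at some p ∈ B. Then u cannot vanish identically on any open subset of B, and the zero set {u = 0} near p is contained in an embedded (m−1)-dimensional submanifold; in particular {u = 0} has empty interior, so the complement {u > 0} is open and dense in B near p. -/
import Mathlib


open Metric

/-- A set `S ⊆ ℝ^m` is an embedded `C¹` hypersurface if near each of its points it is
the zero set of a `C¹` function with nonvanishing differential. -/
def IsC1Hypersurface (m : ℕ) (S : Set (EuclideanSpace ℝ (Fin m))) : Prop :=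
  ∀ x ∈ S, ∃ (g : EuclideanSpace ℝ (Fin m) → ℝ) (U : Set (EuclideanSpace ℝ (Fin m))),
    IsOpen U ∧ x ∈ U ∧ ContDiffOn ℝ 1 g U ∧ fderiv ℝ g x ≠ 0 ∧
      S ∩ U = {y ∈ U | g y = 0}

/-- for `0 ≤ u` solving the uniformly elliptic equation
`a^{ij}D_{ij}u + b^j D_j u = 2c > 0` on a ball `B` with `u(p) = 0`, `Du(p) = 0`:
`u` does not vanish on any open subset of `B`; near `p` the zero set of `u` is
contained in an embedded `(m−1)`-dimensional submanifold; and `{u > 0}` is dense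
in `B` (the zero set has empty interior). -/
theorem stmt_17 (m : ℕ) (z : EuclideanSpace ℝ (Fin m)) (r : ℝ) (hr : 0 < r)
    (c : ℝ) (hc : 0 < c)
    (u : EuclideanSpace ℝ (Fin m) → ℝ)
    (a : EuclideanSpace ℝ (Fin m) → Matrix (Fin m) (Fin m) ℝ)
    (b : EuclideanSpace ℝ (Fin m) → Fin m → ℝ)
    (hu : ContDiffOn ℝ 2 u (ball z r))
    (hell : ∀ x ∈ ball z r, (a x).PosDef)
    (hnonneg : ∀ x ∈ ball z r, 0 ≤ u x)
    (heq : ∀ x ∈ ball z r,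
      (∑ i : Fin m, ∑ j : Fin m, a x i j *
        fderiv ℝ (fun y => fderiv ℝ u y (EuclideanSpace.single j (1 : ℝ))) x
          (EuclideanSpace.single i (1 : ℝ))) +
      (∑ j : Fin m, b x j * fderiv ℝ u x (EuclideanSpace.single j (1 : ℝ))) = 2 * c)
    (p : EuclideanSpace ℝ (Fin m)) (hp : p ∈ ball z r)
    (hup : u p = 0) (hDup : fderiv ℝ u p = 0) :
    (∀ O : Set (EuclideanSpace ℝ (Fin m)), IsOpen O → O ⊆ ball z r → O.Nonempty →
        ¬ ∀ x ∈ O, u x = 0) ∧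
    (∃ U : Set (EuclideanSpace ℝ (Fin m)), IsOpen U ∧ p ∈ U ∧
        ∃ S, IsC1Hypersurface m S ∧ {x ∈ ball z r ∩ U | u x = 0} ⊆ S) ∧
    (∀ O : Set (EuclideanSpace ℝ (Fin m)), IsOpen O → O ⊆ ball z r → O.Nonempty →
        ∃ x ∈ O, 0 < u x) := by
  have key : ∀ O : Set (EuclideanSpace ℝ (Fin m)), IsOpen O → O ⊆ ball z r → O.Nonempty →
      ¬ ∀ x ∈ O, u x = 0 := by
    rintro O hO hOsub ⟨x, hx⟩ hzero
    have hDeq : ∀ y ∈ O, fderiv ℝ u y = 0 := by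
      intro y hy
      have h : u =ᶠ[nhds y] fun _ => (0 : ℝ) := by
        filter_upwards [hO.mem_nhds hy] with w hw using hzero w hw
      rw [h.fderiv_eq]
      exact fderiv_const_apply 0
    have h2 : ∀ j : Fin m,
        fderiv ℝ (fun y => fderiv ℝ u y (EuclideanSpace.single j (1 : ℝ))) x = 0 := by
      intro j
      have h : (fun y => fderiv ℝ u y (EuclideanSpace.single j (1 : ℝ)))
          =ᶠ[nhds x] fun _ => (0 : ℝ) := by
        filter_upwards [hO.mem_nhds hx] with w hw
        rw [hDeq w hw]; rfl
      rw [h.fderiv_eq]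
      exact fderiv_const_apply 0
    have hx' := heq x (hOsub hx)
    rw [hDeq x hx] at hx'
    simp only [h2, ContinuousLinearMap.zero_apply, mul_zero, Finset.sum_const_zero,
      add_zero] at hx'
    linarith
  refine ⟨key, ?_, ?_⟩
  · have hex : ∃ i j : Fin m,
        fderiv ℝ (fun y => fderiv ℝ u y (EuclideanSpace.single j (1 : ℝ))) p
          (EuclideanSpace.single i (1 : ℝ)) ≠ 0 := by
      by_contra h
      push_neg at h
      have hp' := heq p hp
      rw [hDup] at hp'
      simp only [ContinuousLinearMap.zero_apply, mul_zero, Finset.sum_const_zero,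
        add_zero] at hp'
      have : (∑ i : Fin m, ∑ j : Fin m, a p i j *
          fderiv ℝ (fun y => fderiv ℝ u y (EuclideanSpace.single j (1 : ℝ))) p
            (EuclideanSpace.single i (1 : ℝ))) = 0 := by
        apply Finset.sum_eq_zero
        intro i _
        apply Finset.sum_eq_zero
        intro j _
        rw [h i j, mul_zero]
      rw [this] at hp'
      linarith
    obtain ⟨i, j, hij⟩ := hex
    set g : EuclideanSpace ℝ (Fin m) → ℝ :=
      fun y => fderiv ℝ u y (EuclideanSpace.single j (1 : ℝ)) with hgdef
    have hg1 : ContDiffOn ℝ 1 g (ball z r) := by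
      have h1 : ContDiffOn ℝ 1 (fderiv ℝ u) (ball z r) :=
        hu.fderiv_of_isOpen isOpen_ball (by norm_num)
      exact h1.clm_apply contDiffOn_const
    have hφ : ContinuousOn (fun x => fderiv ℝ g x (EuclideanSpace.single i (1 : ℝ)))
        (ball z r) := by
      have h1 : ContinuousOn (fderiv ℝ g) (ball z r) :=
        hg1.continuousOn_fderiv_of_isOpen isOpen_ball le_rfl
      exact (ContinuousLinearMap.apply ℝ ℝ
        (EuclideanSpace.single i (1 : ℝ))).continuous.comp_continuousOn h1
    have hφp : ContinuousAt (fun x => fderiv ℝ g x (EuclideanSpace.single i (1 : ℝ))) p :=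
      hφ.continuousAt (isOpen_ball.mem_nhds hp)
    have hev : ∀ᶠ y in nhds p,
        fderiv ℝ g y (EuclideanSpace.single i (1 : ℝ)) ≠ 0 := hφp.eventually_ne hij
    rw [_root_.eventually_nhds_iff] at hev
    obtain ⟨t, htprop, htopen, htp⟩ := hev
    refine ⟨t ∩ ball z r, htopen.inter isOpen_ball, ⟨htp, hp⟩,
      {y ∈ t ∩ ball z r | g y = 0}, ?_, ?_⟩
    · intro x hx
      refine ⟨g, t ∩ ball z r, htopen.inter isOpen_ball, hx.1,
        hg1.mono Set.inter_subset_right, ?_, ?_⟩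
      · intro h0
        exact htprop x hx.1.1 (by rw [h0]; rfl)
      · ext y
        simp only [Set.mem_inter_iff, Set.mem_setOf_eq]
        tauto
    · rintro x ⟨⟨hxb, hxU⟩, hux⟩
      have hmin : IsLocalMin u x := by
        filter_upwards [isOpen_ball.mem_nhds hxb] with w hw
        rw [hux]
        exact hnonneg w hw
      refine ⟨hxU, ?_⟩
      rw [hgdef]
      simp only
      rw [hmin.fderiv_eq_zero]
      rfl
  · intro O hO hsub hne
    by_contra h
    push_neg at h
    exact key O hO hsub hne fun x hx => le_antisymm (h x hx) (hnonneg x (hsub hx))
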